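/- Let T be the (z,θ)-tree and T′ the (z′,θ)-tree built from the same sequence (θ_n)_{n≥0} of finite plane trees but from two (possibly different) sequences z = (z_n) and z′ = (z′_n) of nonnegative integers, so that each v ∈ θ_n is identified with one vertex in each of T and T′. Let ℓ_n (resp. ℓ′_n) denote the height of the backbone vertex of T (resp. T′) to which θ_n is attached. Then for every n and every vertex v of θ_n: (i) |#T^v − #(T′)^v| = |ℓ_n − ℓ′_n|; and (ii) |n(v,T) − n(v,T′)| ≤ max(z_{ℓ_n}, z′_{ℓ′_n}); in fact both n(v,T) − n(v,θ_n) − 1 and n(v,T′) − n(v,θ_n) − 1 lie in [0, z_{ℓ_n} − 1] and [0, z′_{ℓ′_n} − 1] respectively. -/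

import Mathlib

namespace IPC
/-- A plane tree: a set of finite sequences of positive integers (vertices), containing
the root `[]`, closed under prefixes, closed under earlier siblings, with labels ≥ 1. -/
def IsPlaneTree (T : Set (List ℕ)) : Prop :=
  [] ∈ T ∧
  (∀ v ∈ T, ∀ u : List ℕ, u <+: v → u ∈ T) ∧
  (∀ (v : List ℕ) (i j : ℕ), v ++ [i] ∈ T → 1 ≤ j → j ≤ i → v ++ [j] ∈ T) ∧
  (∀ v ∈ T, ∀ i ∈ v, 1 ≤ i)
/-- `kv T v` : number of children of the vertex `v` in `T`. -/
noncomputable def kv (T : Set (List ℕ)) (v : List ℕ) : ℕ := {i : ℕ | v ++ [i] ∈ T}.ncard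
/-- `rank T v` : number of strict lexicographic predecessors of `v` in `T`. -/
noncomputable def rank (T : Set (List ℕ)) (v : List ℕ) : ℕ := {u ∈ T | u < v}.ncard
/-- Lukaciewicz path of `T`: `luk T n = ∑_{i<n} (k_{vⁱ} - 1)` where `vⁱ` is the `i`-th
vertex of `T` in lexicographic order. -/
noncomputable def luk (T : Set (List ℕ)) (n : ℕ) : ℤ :=
  ∑ᶠ v ∈ {u ∈ T | rank T u < n}, ((kv T v : ℤ) - 1)
/-- `T^v`: the set of vertices of `T` lexicographically ≤ `v`. -/
def below (T : Set (List ℕ)) (v : List ℕ) : Set (List ℕ) := {u ∈ T | u ≤ v}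
/-- `nEdge T v = n(v,T)`: the number of edges of `T` with exactly one endpoint in `T^v`;
an edge is identified with its child endpoint. -/
noncomputable def nEdge (T : Set (List ℕ)) (v : List ℕ) : ℕ :=
  {c ∈ T | c ≠ [] ∧ Xor' (c.dropLast ∈ below T v) (c ∈ below T v)}.ncard

/-- Address of the backbone vertex `BB_i` of a `(z,θ)`-tree: `BB_i` has `1 + z i`
children, the last of which is `BB_{i+1}`. -/
def bbz (z : ℕ → ℕ) : ℕ → List ℕ
  | 0 => []
  | i + 1 => bbz z i ++ [z i + 1]

/-- `cum z i = ∑_{m < i} z m`. -/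
def cum (z : ℕ → ℕ) (i : ℕ) : ℕ := ∑ m ∈ Finset.range i, z m

/-- `ell z n = ℓ_n`: the height of the backbone vertex to which `θ n` is attached,
i.e. the unique `i` with `cum z i ≤ n < cum z (i+1)` (when `∑ z` diverges). -/
noncomputable def ell (z : ℕ → ℕ) (n : ℕ) : ℕ := sInf {i : ℕ | n < cum z (i + 1)}

/-- `graftPt z n = u_n`: the `n`-th non-backbone child of a backbone vertex in
lexicographic order; the root of the copy of `θ n`. -/
noncomputable def graftPt (z : ℕ → ℕ) (n : ℕ) : List ℕ :=
  bbz z (ell z n) ++ [n - cum z (ell z n) + 1]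

/-- The `(z,θ)`-tree: the sin-tree whose backbone is its rightmost branch, in which
`BB_i` has `1 + z i` children (the last being `BB_{i+1}`), and in which the subtree
rooted at the `n`-th non-backbone child `u_n` of a backbone vertex is a copy of `θ n`. -/
noncomputable def zTree (z : ℕ → ℕ) (θ : ℕ → Set (List ℕ)) : Set (List ℕ) :=
  Set.range (bbz z) ∪ ⋃ n, (fun w => graftPt z n ++ w) '' θ n
/- ## list lex order helpers -/
lemma append_lt_append_left {a x y : List ℕ} (h : x < y) : a ++ x < a ++ y :=
  List.Lex.append_left _ h a

lemma append_lt_append_iff (a : List ℕ) {x y : List ℕ} : a ++ x < a ++ y ↔ x < y := by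
  constructor
  · intro h
    induction a with
    | nil => exact h
    | cons c a ih => exact ih (List.cons_lt_cons_self.mp h)
  · exact append_lt_append_left

lemma append_le_append_iff (a : List ℕ) {x y : List ℕ} : a ++ x ≤ a ++ y ↔ x ≤ y := by
  rw [← not_lt, ← not_lt, append_lt_append_iff]

lemma prefix_le {u v : List ℕ} (h : u <+: v) : u ≤ v := by
  obtain ⟨t, rfl⟩ := h
  have := append_le_append_iff (x := ([] : List ℕ)) (y := t) u
  simpa using this.mpr (not_lt.mp (fun h => nomatch h))

lemma lt_of_head_lt {a b : ℕ} (h : a < b) (p x y : List ℕ) :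
    p ++ a :: x < p ++ b :: y :=
  List.Lex.append_left _ (List.Lex.rel h) p

/- ## bbz / cum / ell facts -/
lemma bbz_length (z : ℕ → ℕ) (i : ℕ) : (bbz z i).length = i := by
  induction i with
  | zero => rfl
  | succ i ih => simp [bbz, ih]

lemma bbz_prefix (z : ℕ → ℕ) {i j : ℕ} (h : i ≤ j) : bbz z i <+: bbz z j := by
  induction j with
  | zero => simp_all
  | succ j ih =>
    rcases Nat.eq_or_lt_of_le h with rfl | h
    · exact List.prefix_refl _
    · exact (ih (Nat.lt_succ_iff.mp h)).trans ⟨[z j + 1], rfl⟩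

lemma cum_succ (z : ℕ → ℕ) (i : ℕ) : cum z (i + 1) = cum z i + z i := by
  simp [cum, Finset.sum_range_succ]

lemma cum_mono (z : ℕ → ℕ) : Monotone (cum z) := by
  intro a b h
  exact Finset.sum_le_sum_of_subset (Finset.range_subset_range.mpr h)

lemma ell_spec (z : ℕ → ℕ) (hz : ∀ N : ℕ, ∃ i : ℕ, N < cum z i) (n : ℕ) :
    cum z (ell z n) ≤ n ∧ n < cum z (ell z n + 1) := by
  have hne : {i : ℕ | n < cum z (i + 1)}.Nonempty := by
    obtain ⟨i, hi⟩ := hz n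
    exact ⟨i, lt_of_lt_of_le hi (cum_mono z (Nat.le_succ i))⟩
  constructor
  · rcases Nat.eq_zero_or_pos (ell z n) with h | h
    · simp [h, cum]
    · have := Nat.notMem_of_lt_sInf (show ell z n - 1 < ell z n from Nat.sub_lt h one_pos)
      simp only [Set.mem_setOf_eq, not_lt] at this
      rwa [Nat.sub_add_cancel h] at this
  · exact Nat.sInf_mem hne

lemma ell_mono (z : ℕ → ℕ) (hz : ∀ N : ℕ, ∃ i : ℕ, N < cum z i) {a b : ℕ} (h : a ≤ b) :
    ell z a ≤ ell z b := by
  have hb := (ell_spec z hz b).2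
  exact Nat.sInf_le (Set.mem_setOf_eq ▸ lt_of_le_of_lt h hb)

lemma ell_le_of_lt_cum (z : ℕ → ℕ) {n i : ℕ} (h : n < cum z (i + 1)) : ell z n ≤ i :=
  Nat.sInf_le h
/- ## graftPt facts -/
section Graft
variable {z : ℕ → ℕ} (hz : ∀ N : ℕ, ∃ i : ℕ, N < cum z i)
include hz

lemma graft_head_le (n : ℕ) : n - cum z (ell z n) + 1 ≤ z (ell z n) := by
  have h := ell_spec z hz n
  have := cum_succ z (ell z n)
  omega

omit hz in
lemma graftPt_length (n : ℕ) : (graftPt z n).length = ell z n + 1 := by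
  simp [graftPt, bbz_length]

lemma graft_lt {m m' : ℕ} (h : m < m') (s t : List ℕ) :
    graftPt z m ++ s < graftPt z m' ++ t := by
  have hle : ell z m ≤ ell z m' := ell_mono z hz h.le
  rcases eq_or_lt_of_le hle with he | hlt
  · have hc : cum z (ell z m) ≤ m := (ell_spec z hz m).1
    have : graftPt z m' ++ t
        = bbz z (ell z m) ++ (m' - cum z (ell z m) + 1) :: t := by
      simp [graftPt, ← he, List.append_assoc]
    rw [this, show graftPt z m ++ s
        = bbz z (ell z m) ++ (m - cum z (ell z m) + 1) :: s by
      simp [graftPt, List.append_assoc]]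
    exact lt_of_head_lt (by omega) _ _ _
  · obtain ⟨r, hr⟩ := bbz_prefix z (show ell z m + 1 ≤ ell z m' from hlt)
    have : graftPt z m' ++ t
        = bbz z (ell z m) ++ (z (ell z m) + 1) :: (r ++ [m' - cum z (ell z m') + 1] ++ t) := by
      simp [graftPt, ← hr, bbz, List.append_assoc]
    rw [this, show graftPt z m ++ s
        = bbz z (ell z m) ++ (m - cum z (ell z m) + 1) :: s by
      simp [graftPt, List.append_assoc]]
    exact lt_of_head_lt (by have := graft_head_le hz m; omega) _ _ _

lemma graft_ne_bbz (m : ℕ) (s : List ℕ) (i : ℕ) : graftPt z m ++ s ≠ bbz z i := by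
  intro h
  have hp1 : graftPt z m <+: bbz z i := h ▸ ⟨s, rfl⟩
  have hlen : ell z m + 1 ≤ i := by
    have := hp1.length_le
    rw [graftPt_length m] at this
    simpa [bbz_length] using this
  have hp2 : bbz z (ell z m + 1) <+: bbz z i := bbz_prefix z hlen
  have heq : graftPt z m = bbz z (ell z m + 1) :=
    List.IsPrefix.eq_of_length
      (List.prefix_of_prefix_length_le hp1 hp2
        (by simp [graftPt_length, bbz_length]))
      (by simp [graftPt_length, bbz_length])
  have := graft_head_le hz m
  simp only [graftPt, bbz, List.append_cancel_left_eq, List.cons.injEq] at heq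
  omega

lemma lt_bbz (n : ℕ) (w : List ℕ) {i : ℕ} (h : ell z n < i) :
    graftPt z n ++ w < bbz z i := by
  obtain ⟨r, hr⟩ := bbz_prefix z (show ell z n + 1 ≤ i from h)
  have : bbz z i = bbz z (ell z n) ++ (z (ell z n) + 1) :: r := by
    simp [← hr, bbz, List.append_assoc]
  rw [this, show graftPt z n ++ w
      = bbz z (ell z n) ++ (n - cum z (ell z n) + 1) :: w by
    simp [graftPt, List.append_assoc]]
  exact lt_of_head_lt (by have := graft_head_le hz n; omega) _ _ _

omit hz in
lemma bbz_le_graft {i n : ℕ} (h : i ≤ ell z n) (w : List ℕ) :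
    bbz z i ≤ graftPt z n ++ w :=
  prefix_le (((bbz_prefix z h).trans ⟨_, rfl⟩).trans ⟨w, rfl⟩)

lemma bbz_le_graft_iff (n : ℕ) (w : List ℕ) (i : ℕ) :
    bbz z i ≤ graftPt z n ++ w ↔ i ≤ ell z n := by
  refine ⟨fun h => ?_, fun h => bbz_le_graft h w⟩
  by_contra hc
  exact absurd (lt_of_le_of_lt h (lt_bbz hz n w (by omega))) (lt_irrefl _)

lemma ell_eq_of {n m : ℕ} (h1 : n ≤ m) (h2 : m < cum z (ell z n + 1)) :
    ell z m = ell z n :=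
  le_antisymm (ell_le_of_lt_cum z h2) (ell_mono z hz h1)

lemma graft_lt_iff (n m : ℕ) (w : List ℕ) :
    graftPt z n ++ w < graftPt z m ↔ n < m := by
  constructor
  · intro h
    by_contra hc
    push_neg at hc
    rcases eq_or_lt_of_le hc with rfl | hlt
    · exact absurd (lt_of_le_of_lt (prefix_le ⟨w, rfl⟩) h) (lt_irrefl _)
    · have := graft_lt hz hlt [] w
      simp only [List.append_nil] at this
      exact absurd (this.trans h) (lt_irrefl _)
  · intro h
    have := graft_lt hz h w []
    simpa using this

end Graft

lemma mem_zTree_iff {z : ℕ → ℕ} {θ : ℕ → Set (List ℕ)} {x : List ℕ} :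
    x ∈ zTree z θ ↔ (∃ i, bbz z i = x) ∨ ∃ m, ∃ w ∈ θ m, graftPt z m ++ w = x := by
  simp [zTree, Set.mem_union, Set.mem_range, Set.mem_iUnion, Set.mem_image]

lemma zTree_prefix_closed {z : ℕ → ℕ} {θ : ℕ → Set (List ℕ)}
    (hθ : ∀ n, IsPlaneTree (θ n)) :
    ∀ x ∈ zTree z θ, ∀ u : List ℕ, u <+: x → u ∈ zTree z θ := by
  intro x hx u hu
  rw [mem_zTree_iff] at hx ⊢
  rcases hx with ⟨i, rfl⟩ | ⟨m, w, hw, rfl⟩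
  · left
    refine ⟨u.length, ?_⟩
    exact (List.IsPrefix.eq_of_length
      (List.prefix_of_prefix_length_le (bbz_prefix z (by simpa [bbz_length] using hu.length_le)) hu
        (by simp [bbz_length])) (by simp [bbz_length])).symm ▸ rfl
  · rcases le_or_gt u.length (ell z m) with hl | hl
    · left
      have hub : u <+: bbz z (ell z m) := by
        refine List.prefix_of_prefix_length_le hu ?_ (by simp [bbz_length, hl])
        exact List.IsPrefix.trans ⟨_, rfl⟩ (⟨w, rfl⟩ : ∃ t, graftPt z m ++ t = graftPt z m ++ w)
      refine ⟨u.length, ?_⟩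
      exact List.IsPrefix.eq_of_length
        (List.prefix_of_prefix_length_le (bbz_prefix z (by simpa [bbz_length] using hub.length_le)) hub
          (by simp [bbz_length])) (by simp [bbz_length])
    · right
      have hgu : graftPt z m <+: u := by
        refine List.prefix_of_prefix_length_le ⟨w, rfl⟩ hu ?_
        simp [graftPt_length]; omega
      obtain ⟨w', rfl⟩ := hgu
      refine ⟨m, w', ?_, rfl⟩
      exact (hθ m).2.1 w hw w' ((List.prefix_append_right_inj _).mp hu)
/- ## Counting vertices below the marked vertex -/
def Dset (θ : ℕ → Set (List ℕ)) (n : ℕ) (w : List ℕ) : Set (ℕ × List ℕ) :=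
  {p | (p.1 < n ∧ p.2 ∈ θ p.1) ∨ (p.1 = n ∧ p.2 ∈ θ n ∧ p.2 ≤ w)}

lemma Dset_finite {θ : ℕ → Set (List ℕ)} (hfin : ∀ n, (θ n).Finite) (n : ℕ) (w : List ℕ) :
    (Dset θ n w).Finite := by
  apply Set.Finite.subset ((Set.finite_Iic n).prod ((Set.finite_Iic n).biUnion fun m _ => hfin m))
  rintro ⟨m, u⟩ (⟨h1, h2⟩ | ⟨rfl, h2, _⟩)
  · exact ⟨Set.mem_Iic.mpr h1.le, Set.mem_biUnion (Set.mem_Iic.mpr h1.le) h2⟩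
  · exact ⟨Set.mem_Iic.mpr (le_refl _), Set.mem_biUnion (Set.mem_Iic.mpr (le_refl _)) h2⟩

lemma bbz_injective (z : ℕ → ℕ) : Function.Injective (bbz z) := fun i j h => by
  rw [← bbz_length z i, h, bbz_length]

lemma count_below {z : ℕ → ℕ} (hz : ∀ N : ℕ, ∃ i : ℕ, N < cum z i)
    {θ : ℕ → Set (List ℕ)} (hfin : ∀ n, (θ n).Finite) (n : ℕ) (w : List ℕ) :
    {x ∈ zTree z θ | x ≤ graftPt z n ++ w}.ncard = ell z n + 1 + (Dset θ n w).ncard := by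
  have hset : {x ∈ zTree z θ | x ≤ graftPt z n ++ w}
      = bbz z '' Set.Iic (ell z n)
        ∪ (fun p : ℕ × List ℕ => graftPt z p.1 ++ p.2) '' Dset θ n w := by
    ext x
    constructor
    · rintro ⟨hx, hle⟩
      rcases mem_zTree_iff.mp hx with ⟨i, rfl⟩ | ⟨m, w', hw', rfl⟩
      · exact Or.inl ⟨i, (bbz_le_graft_iff hz n w i).mp hle, rfl⟩
      · refine Or.inr ⟨(m, w'), ?_, rfl⟩
        rcases lt_trichotomy m n with h | rfl | h
        · exact Or.inl ⟨h, hw'⟩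
        · exact Or.inr ⟨rfl, hw', (append_le_append_iff _).mp hle⟩
        · exact absurd (lt_of_le_of_lt hle (graft_lt hz h w w')) (lt_irrefl _)
    · rintro (⟨i, hi, rfl⟩ | ⟨⟨m, w'⟩, hp, rfl⟩)
      · exact ⟨mem_zTree_iff.mpr (Or.inl ⟨i, rfl⟩), bbz_le_graft hi w⟩
      · rcases hp with ⟨hm, hw'⟩ | ⟨rfl, hw', hle⟩
        · exact ⟨mem_zTree_iff.mpr (Or.inr ⟨m, w', hw', rfl⟩), (graft_lt hz hm w' w).le⟩
        · exact ⟨mem_zTree_iff.mpr (Or.inr ⟨m, w', hw', rfl⟩), (append_le_append_iff _).mpr hle⟩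
  have hdisj : Disjoint (bbz z '' Set.Iic (ell z n))
      ((fun p : ℕ × List ℕ => graftPt z p.1 ++ p.2) '' Dset θ n w) := by
    rw [Set.disjoint_left]
    rintro x ⟨i, _, rfl⟩ ⟨⟨m, w'⟩, _, heq⟩
    exact graft_ne_bbz hz m w' i heq
  have hinj : Set.InjOn (fun p : ℕ × List ℕ => graftPt z p.1 ++ p.2) (Dset θ n w) := by
    rintro ⟨m, u⟩ _ ⟨m', u'⟩ _ heq
    simp only at heq
    rcases lt_trichotomy m m' with h | rfl | h
    · exact absurd (heq ▸ graft_lt hz h u u') (lt_irrefl _)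
    · exact Prod.ext rfl (List.append_cancel_left heq)
    · exact absurd (heq ▸ graft_lt hz h u' u) (lt_irrefl _)
  rw [hset, Set.ncard_union_eq hdisj ((Set.finite_Iic _).image _)
      ((Dset_finite hfin n w).image _),
    Set.ncard_image_of_injOn ((bbz_injective z).injOn), Set.ncard_image_of_injOn hinj,
    show Set.Iic (ell z n) = ↑(Finset.Iic (ell z n)) by simp, Set.ncard_coe_finset]
  simp
/- ## Crossing edges -/
lemma nEdge_eq_of_prefix_closed {T : Set (List ℕ)} (v : List ℕ)
    (hT : ∀ x ∈ T, ∀ u : List ℕ, u <+: x → u ∈ T) :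
    nEdge T v = {c ∈ T | c ≠ [] ∧ c.dropLast ≤ v ∧ ¬ c ≤ v}.ncard := by
  unfold nEdge
  congr 1
  ext c
  simp only [Set.mem_setOf_eq, below, Xor']
  constructor
  · rintro ⟨hc, hne, hx⟩
    refine ⟨hc, hne, ?_⟩
    rcases hx with ⟨⟨_, h1⟩, h2⟩ | ⟨⟨_, h1⟩, h2⟩
    · exact ⟨h1, fun hle => h2 ⟨hc, hle⟩⟩
    · exact absurd ⟨hT c hc _ (List.dropLast_prefix c),
        (prefix_le (List.dropLast_prefix c)).trans h1⟩ h2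
  · rintro ⟨hc, hne, h1, h2⟩
    exact ⟨hc, hne, Or.inl ⟨⟨hT c hc _ (List.dropLast_prefix c), h1⟩, fun h => h2 h.2⟩⟩

lemma graftPt_dropLast (z : ℕ → ℕ) (m : ℕ) : (graftPt z m).dropLast = bbz z (ell z m) :=
  List.dropLast_concat

lemma graftPt_ne_nil (z : ℕ → ℕ) (m : ℕ) : graftPt z m ≠ [] := by
  simp [graftPt]

lemma nEdge_zTree {z : ℕ → ℕ} (hz : ∀ N : ℕ, ∃ i : ℕ, N < cum z i)
    {θ : ℕ → Set (List ℕ)} (hθ : ∀ n, IsPlaneTree (θ n)) (hfin : ∀ n, (θ n).Finite)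
    (n : ℕ) (w : List ℕ) (hw : w ∈ θ n) :
    nEdge (zTree z θ) (graftPt z n ++ w)
      = nEdge (θ n) w + 1 + (cum z (ell z n + 1) - n - 1) := by
  set ℓ := ell z n with hℓ
  set v := graftPt z n ++ w with hv
  rw [nEdge_eq_of_prefix_closed v (zTree_prefix_closed hθ),
    nEdge_eq_of_prefix_closed w (hθ n).2.1]
  have hset : {c ∈ zTree z θ | c ≠ [] ∧ c.dropLast ≤ v ∧ ¬ c ≤ v}
      = (fun u => graftPt z n ++ u) '' {u ∈ θ n | u ≠ [] ∧ u.dropLast ≤ w ∧ ¬ u ≤ w}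
        ∪ ({bbz z (ℓ + 1)} ∪ graftPt z '' Set.Ioo n (cum z (ℓ + 1))) := by
    ext c
    constructor
    · rintro ⟨hc, hne, hd, hnb⟩
      rcases mem_zTree_iff.mp hc with ⟨i, rfl⟩ | ⟨m, u, hu, rfl⟩
      · -- backbone vertex
        rcases i with _ | j
        · exact absurd rfl hne
        · have hdl : (bbz z (j + 1)).dropLast = bbz z j := List.dropLast_concat
          rw [hdl] at hd
          have hj : j ≤ ℓ := (bbz_le_graft_iff hz n w j).mp hd
          have hj2 : ¬ j + 1 ≤ ℓ := fun h => hnb ((bbz_le_graft_iff hz n w (j+1)).mpr h)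
          have : j = ℓ := by omega
          exact Or.inr (Or.inl (by rw [this]; rfl))
      · -- grafted vertex
        rcases eq_or_ne u [] with rfl | hune
        · -- c = graftPt z m
          rw [List.append_nil] at hd hnb ⊢
          rw [graftPt_dropLast] at hd
          have hnm : n < m := by
            by_contra hc'
            push_neg at hc'
            rcases eq_or_lt_of_le hc' with rfl | hlt
            · exact hnb (prefix_le ⟨w, rfl⟩)
            · exact hnb (le_of_lt (by simpa using graft_lt hz hlt [] w))
          have hℓm : ell z m ≤ ℓ := (bbz_le_graft_iff hz n w _).mp hd
          have hℓm2 : ℓ ≤ ell z m := ell_mono z hz hnm.le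
          have hcum : m < cum z (ℓ + 1) := by
            have := (ell_spec z hz m).2
            rwa [le_antisymm hℓm hℓm2] at this
          exact Or.inr (Or.inr ⟨m, ⟨hnm, hcum⟩, rfl⟩)
        · -- c = graftPt z m ++ u, u ≠ []
          rw [List.dropLast_append_of_ne_nil hune] at hd
          rcases lt_trichotomy m n with h | rfl | h
          · exact absurd ((graft_lt hz h u w).le) hnb
          · refine Or.inl ⟨u, ⟨hu, hune, ?_, ?_⟩, rfl⟩
            · exact (append_le_append_iff _).mp hd
            · exact fun h => hnb ((append_le_append_iff _).mpr h)
          · exact absurd (lt_of_le_of_lt hd (graft_lt hz h w u.dropLast)) (lt_irrefl _)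
    · rintro (⟨u, ⟨hu, hune, h1, h2⟩, rfl⟩ | h | ⟨m, ⟨hm1, hm2⟩, rfl⟩)
      · refine ⟨mem_zTree_iff.mpr (Or.inr ⟨n, u, hu, rfl⟩), by simp [hune], ?_, ?_⟩
        · rw [List.dropLast_append_of_ne_nil hune]
          exact (append_le_append_iff _).mpr h1
        · exact fun h => h2 ((append_le_append_iff _).mp h)
      · rcases h with rfl
        refine ⟨mem_zTree_iff.mpr (Or.inl ⟨ℓ + 1, rfl⟩), ?_, ?_, ?_⟩
        · intro h
          have := bbz_length z (ℓ + 1)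
          rw [h] at this
          simp at this
        · rw [show (bbz z (ℓ + 1)).dropLast = bbz z ℓ from List.dropLast_concat]
          exact bbz_le_graft (le_refl _) w
        · exact fun h => absurd (lt_of_le_of_lt h (lt_bbz hz n w (Nat.lt_succ_self ℓ)))
            (lt_irrefl _)
      · have hℓm : ell z m = ℓ := ell_eq_of hz hm1.le hm2
        refine ⟨mem_zTree_iff.mpr (Or.inr ⟨m, [], (hθ m).1, List.append_nil _⟩),
          graftPt_ne_nil z m, ?_, ?_⟩
        · rw [graftPt_dropLast, hℓm]
          exact bbz_le_graft (le_refl _) w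
        · intro h
          exact absurd (lt_of_le_of_lt h ((graft_lt_iff hz n m w).mpr hm1)) (lt_irrefl _)
  rw [hset]
  have hfinθ : {u ∈ θ n | u ≠ [] ∧ u.dropLast ≤ w ∧ ¬ u ≤ w}.Finite :=
    (hfin n).subset (fun u hu => hu.1)
  have hfin1 : ((fun u => graftPt z n ++ u) ''
      {u ∈ θ n | u ≠ [] ∧ u.dropLast ≤ w ∧ ¬ u ≤ w}).Finite := hfinθ.image _
  have hfin3 : (graftPt z '' Set.Ioo n (cum z (ℓ + 1))).Finite :=
    (Set.finite_Ioo _ _).image _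
  have hd13 : Disjoint ((fun u => graftPt z n ++ u) ''
        {u ∈ θ n | u ≠ [] ∧ u.dropLast ≤ w ∧ ¬ u ≤ w})
      ({bbz z (ℓ + 1)} ∪ graftPt z '' Set.Ioo n (cum z (ℓ + 1))) := by
    rw [Set.disjoint_left]
    rintro x ⟨u, _, rfl⟩ (h | ⟨m, hm, heq⟩)
    · exact graft_ne_bbz hz n u (ℓ + 1) h
    · have hlt := graft_lt hz hm.1 u []
      rw [List.append_nil] at hlt
      exact (ne_of_lt hlt) heq.symm
  have hd23 : Disjoint ({bbz z (ℓ + 1)} : Set (List ℕ))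
      (graftPt z '' Set.Ioo n (cum z (ℓ + 1))) := by
    rw [Set.disjoint_left]
    rintro x rfl ⟨m, _, heq⟩
    exact graft_ne_bbz hz m [] (ℓ + 1) (by simpa using heq)
  rw [Set.ncard_union_eq hd13 hfin1 ((Set.finite_singleton _).union hfin3),
    Set.ncard_union_eq hd23 (Set.finite_singleton _) hfin3,
    Set.ncard_image_of_injOn (fun a _ b _ h => List.append_cancel_left h),
    Set.ncard_image_of_injOn (fun a _ b _ h => ?_), Set.ncard_singleton,
    show Set.Ioo n (cum z (ℓ + 1)) = ↑(Finset.Ioo n (cum z (ℓ + 1))) by simp,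
    Set.ncard_coe_finset, Nat.card_Ioo]
  · ring
  · by_contra hab
    rcases lt_or_gt_of_ne hab with hl | hl
    · have := graft_lt hz hl [] []
      simp only [List.append_nil] at this
      exact absurd (h ▸ this) (lt_irrefl _)
    · have := graft_lt hz hl [] []
      simp only [List.append_nil] at this
      exact absurd (h ▸ this) (lt_irrefl _)

/-- Comparison of the `(z,θ)`-tree `T` and the `(z',θ)`-tree `T'`
built from the same trees `θ n` but different backbone-degree sequences `z, z'`.
For a vertex `w` of `θ n`, identified with `v = u_n ++ w` in `T` and `v' = u'_n ++ w`
in `T'`: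
(i) `|#T^v − #T'^{v'}| = |ℓ_n − ℓ'_n|`;
(ii) both `n(v,T) − n(w,θ_n) − 1 ∈ [0, z_{ℓ_n} − 1]` and
`n(v',T') − n(w,θ_n) − 1 ∈ [0, z'_{ℓ'_n} − 1]`; hence
`|n(v,T) − n(v',T')| ≤ max (z_{ℓ_n}) (z'_{ℓ'_n})`. -/
theorem zTree_compare (z z' : ℕ → ℕ) (θ : ℕ → Set (List ℕ))
    (hθ : ∀ n, IsPlaneTree (θ n)) (hfin : ∀ n, (θ n).Finite)
    (hz : ∀ N : ℕ, ∃ i : ℕ, N < cum z i) (hz' : ∀ N : ℕ, ∃ i : ℕ, N < cum z' i) :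
    ∀ n : ℕ, ∀ w ∈ θ n,
      (|({x ∈ zTree z θ | x ≤ graftPt z n ++ w}.ncard : ℤ)
          - ({x ∈ zTree z' θ | x ≤ graftPt z' n ++ w}.ncard : ℤ)|
        = |(ell z n : ℤ) - (ell z' n : ℤ)|) ∧
      (0 ≤ (nEdge (zTree z θ) (graftPt z n ++ w) : ℤ) - (nEdge (θ n) w : ℤ) - 1 ∧
        (nEdge (zTree z θ) (graftPt z n ++ w) : ℤ) - (nEdge (θ n) w : ℤ) - 1
          ≤ (z (ell z n) : ℤ) - 1) ∧
      (0 ≤ (nEdge (zTree z' θ) (graftPt z' n ++ w) : ℤ) - (nEdge (θ n) w : ℤ) - 1 ∧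
        (nEdge (zTree z' θ) (graftPt z' n ++ w) : ℤ) - (nEdge (θ n) w : ℤ) - 1
          ≤ (z' (ell z' n) : ℤ) - 1) ∧
      |(nEdge (zTree z θ) (graftPt z n ++ w) : ℤ)
          - (nEdge (zTree z' θ) (graftPt z' n ++ w) : ℤ)|
        ≤ max (z (ell z n) : ℤ) (z' (ell z' n) : ℤ) := by
  intro n w hw
  have HA := count_below hz hfin n w
  have HA' := count_below hz' hfin n w
  have HB := nEdge_zTree hz hθ hfin n w hw
  have HB' := nEdge_zTree hz' hθ hfin n w hw
  have hs := ell_spec z hz n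
  have hs' := ell_spec z' hz' n
  have hcs := cum_succ z (ell z n)
  have hcs' := cum_succ z' (ell z' n)
  set e : ℕ := cum z (ell z n + 1) - n - 1 with he
  set e' : ℕ := cum z' (ell z' n + 1) - n - 1 with he'
  have he1 : e + n + 1 = cum z (ell z n + 1) := by omega
  have he2 : e + 1 ≤ z (ell z n) := by omega
  have he1' : e' + n + 1 = cum z' (ell z' n + 1) := by omega
  have he2' : e' + 1 ≤ z' (ell z' n) := by omega
  refine ⟨?_, ⟨?_, ?_⟩, ⟨?_, ?_⟩, ?_⟩
  · rw [HA, HA']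
    have : ((ell z n + 1 + (Dset θ n w).ncard : ℕ) : ℤ)
        - ((ell z' n + 1 + (Dset θ n w).ncard : ℕ) : ℤ)
        = (ell z n : ℤ) - (ell z' n : ℤ) := by push_cast; ring
    rw [this]
  · rw [HB]; push_cast; omega
  · rw [HB]; push_cast [he2]; omega
  · rw [HB']; push_cast; omega
  · rw [HB']; push_cast [he2']; omega
  · rw [HB, HB']
    rw [abs_le]
    constructor
    · have h1 : (z' (ell z' n) : ℤ) ≤ max (z (ell z n) : ℤ) (z' (ell z' n) : ℤ) :=
        le_max_right _ _
      push_cast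
      omega
    · have h1 : (z (ell z n) : ℤ) ≤ max (z (ell z n) : ℤ) (z' (ell z' n) : ℤ) :=
        le_max_left _ _
      push_cast
      omega

end IPC
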